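/- Let k be a field and consider the cone X = {(x,y,z) : xy = z²}. For any ring A in Inf_k (local k-algebra with residue field k and nilpotent maximal ideal m_A) and any arc γ(t) = (x(t), y(t), z(t)) ∈ X(A[[t]]) deforming γ₀(t) = (t², 0, 0) (i.e. reducing to γ₀ modulo m_A), writing by Weierstrass preparation x(t) = q(t)·u(t) with q(t) = a + b·t + t² monic of degree 2, a, b ∈ m_A, u ∈ A[[t]]ˣ, and z(t) = v + w·t + q(t)·h(t) with v, w ∈ A, the elements (a, b, v, w) satisfy the equations a·w² = v² and b·w² = 2·w·v in A. -/

import Mathlib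

open PowerSeries

/-- Let `k` be a field and `A` a local `k`-algebra with nilpotent maximal ideal and
residue field `k`.  Let `(x(t), y(t), z(t))` be an arc on the cone `xy = z²`
deforming `γ₀(t) = (t², 0, 0)`.  Writing (by Weierstrass preparation)
`x(t) = (a + b·t + t²)·u(t)` with `a, b` in the maximal ideal and `u` a unit, and
`z(t) = v + w·t + (a + b·t + t²)·h(t)`, the elements `(a, b, v, w)` satisfy
`a·w² = v²` and `b·w² = 2·w·v`. -/
theorem cone_arc_finite_model_equations {k : Type*} [Field k]
    {A : Type*} [CommRing A] [IsLocalRing A] [Algebra k A]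
    (m : ℕ) (hm : (IsLocalRing.maximalIdeal A) ^ m = 0)
    (hres : Function.Bijective ((IsLocalRing.residue A).comp (algebraMap k A)))
    (x y z : PowerSeries A)
    (harc : x * y = z ^ 2)
    (hx0 : PowerSeries.map (IsLocalRing.residue A) x = PowerSeries.X ^ 2)
    (hy0 : PowerSeries.map (IsLocalRing.residue A) y = 0)
    (hz0 : PowerSeries.map (IsLocalRing.residue A) z = 0)
    (a b : A) (ha : a ∈ IsLocalRing.maximalIdeal A) (hb : b ∈ IsLocalRing.maximalIdeal A)
    (u : (PowerSeries A)ˣ)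
    (hxfact : x = (PowerSeries.C a + PowerSeries.C b * PowerSeries.X
      + PowerSeries.X ^ 2) * (u : PowerSeries A))
    (v w : A) (h : PowerSeries A)
    (hzfact : z = PowerSeries.C v + PowerSeries.C w * PowerSeries.X
      + (PowerSeries.C a + PowerSeries.C b * PowerSeries.X + PowerSeries.X ^ 2) * h) :
    a * w ^ 2 = v ^ 2 ∧ b * w ^ 2 = 2 * w * v := by
  set q : PowerSeries A := PowerSeries.C a + PowerSeries.C b * PowerSeries.X
      + PowerSeries.X ^ 2 with hq
  set r : PowerSeries A := PowerSeries.C v + PowerSeries.C w * PowerSeries.X with hr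
  set g : PowerSeries A := (u : PowerSeries A) * y - (2 * r * h + q * h ^ 2) with hg
  have key : q * g = PowerSeries.C (v^2) + PowerSeries.C (2*v*w) * PowerSeries.X
      + PowerSeries.C (w^2) * PowerSeries.X ^ 2 := by
    rw [hxfact, hzfact] at harc
    have hC : PowerSeries.C (v^2) + PowerSeries.C (2*v*w) * PowerSeries.X
      + PowerSeries.C (w^2) * PowerSeries.X ^ 2 = r ^ 2 := by
      simp only [hr, map_mul, map_pow, map_ofNat]
      ring
    rw [hC, hg]
    linear_combination harc
  set G : ℕ → A := fun n => PowerSeries.coeff n g with hG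
  have hqg : q * g = PowerSeries.C a * g + PowerSeries.C b * (PowerSeries.X * g)
      + PowerSeries.X ^ 2 * g := by rw [hq]; ring
  have hcoeff : ∀ n, PowerSeries.coeff n (PowerSeries.C a * g
      + PowerSeries.C b * (PowerSeries.X * g) + PowerSeries.X ^ 2 * g)
      = PowerSeries.coeff n (PowerSeries.C (v^2) + PowerSeries.C (2*v*w) * PowerSeries.X
      + PowerSeries.C (w^2) * PowerSeries.X ^ 2) := by
    intro n; rw [← hqg, key]
  have h1z : PowerSeries.coeff 0 (PowerSeries.X * g) = 0 :=
    PowerSeries.coeff_zero_X_mul g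
  have h2z : ∀ n, n < 2 → PowerSeries.coeff n (PowerSeries.X ^ 2 * g) = 0 := by
    intro n hn
    rw [PowerSeries.coeff_X_pow_mul' g 2 n, if_neg (by omega)]
  have e0 : a * G 0 = v ^ 2 := by
    have := hcoeff 0
    simp only [map_add, coeff_C_mul, coeff_C, coeff_X, coeff_X_pow, h1z, h2z 0 (by norm_num)] at this
    norm_num at this
    simpa [hG] using this
  have e1 : a * G 1 + b * G 0 = 2 * v * w := by
    have := hcoeff 1
    have h1 : PowerSeries.coeff 1 (PowerSeries.X * g) = G 0 :=
      PowerSeries.coeff_succ_X_mul 0 g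
    simp only [map_add, coeff_C_mul, coeff_C, coeff_X, coeff_X_pow, h1,
      h2z 1 (by norm_num)] at this
    norm_num at this
    simpa [hG] using this
  have e2 : a * G 2 + b * G 1 + G 0 = w ^ 2 := by
    have := hcoeff 2
    have h1 : PowerSeries.coeff 2 (PowerSeries.X * g) = G 1 :=
      PowerSeries.coeff_succ_X_mul 1 g
    have h2 : PowerSeries.coeff 2 (PowerSeries.X ^ 2 * g) = G 0 := by
      rw [show (2:ℕ) = 0 + 2 from rfl, PowerSeries.coeff_X_pow_mul]
    simp only [map_add, coeff_C_mul, coeff_C, coeff_X, coeff_X_pow, h1, h2] at this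
    norm_num at this
    simpa [hG] using this
  have e3 : ∀ n, a * G (n+3) + b * G (n+2) + G (n+1) = 0 := by
    intro n
    have := hcoeff (n+3)
    have h1 : PowerSeries.coeff (n+3) (PowerSeries.X * g) = G (n+2) :=
      PowerSeries.coeff_succ_X_mul (n+2) g
    have h2 : PowerSeries.coeff (n+3) (PowerSeries.X ^ 2 * g) = G (n+1) := by
      rw [show n+3 = (n+1) + 2 from rfl, PowerSeries.coeff_X_pow_mul]
    simp only [map_add, coeff_C_mul, coeff_C, coeff_X, coeff_X_pow, h1, h2] at this
    rw [if_neg (by omega : ¬(n+3 = 0)), if_neg (by omega : ¬(n+3 = 1)),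
      if_neg (by omega : ¬(n+3 = 2))] at this
    simpa [hG] using this
  -- all higher coefficients of g vanish
  have hvan : ∀ j n, G (n+1) ∈ (IsLocalRing.maximalIdeal A) ^ j := by
    intro j
    induction j with
    | zero => intro n; simp
    | succ j ih =>
      intro n
      have hrec : G (n+1) = -(a * G (n+3)) + -(b * G (n+2)) := by
        linear_combination e3 n
      rw [hrec, pow_succ']
      exact add_mem (neg_mem (Ideal.mul_mem_mul ha (ih (n+2))))
        (neg_mem (Ideal.mul_mem_mul hb (ih (n+1))))
  have hzero : ∀ n, G (n+1) = 0 := by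
    intro n
    have := hvan m n
    rw [hm] at this
    simpa using this
  have hG0 : G 0 = w ^ 2 := by
    have := e2
    rw [show (2:ℕ) = 1 + 1 from rfl, hzero 1, hzero 0] at this
    linear_combination this
  constructor
  · rw [← e0, hG0]
  · have := e1
    rw [(hzero 0 : G 1 = 0), hG0] at this
    linear_combination this
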